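/- Suppose ν has a generating sequence Q_0 = X, Q_1 = Y, Q_2, … in which every Q_l is an eigenfunction for H_{i,j,t,x}. Then for every r ≥ 1: γ_r ∈ S^{(A_{i,j,t,x})_𝔫}(ν) if and only if Q_r ∈ A_{i,j,t,x}. -/

import Mathlib

open MvPolynomial Finset Pointwise

noncomputable section

namespace DuttaPaper

/-- The polynomial ring `K[X,Y]`, with `X = X 0` and `Y = X 1`. -/
abbrev Poly (K : Type) [Field K] : Type := MvPolynomial (Fin 2) K

/-- The rational function field `K(X,Y)`. -/
abbrev RF (K : Type) [Field K] : Type := FractionRing (Poly K)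

variable {K : Type} [Field K]

/-- The `K`-algebra endomorphism of `K[X,Y]` sending `X ↦ u • X`, `Y ↦ v • Y`;
this is the action of `(u,v) ∈ 𝕌_m × 𝕌_n` on `K[X,Y]`. -/
def act (u v : K) : Poly K →ₐ[K] Poly K :=
  MvPolynomial.aeval ![MvPolynomial.C u * MvPolynomial.X 0,
    MvPolynomial.C v * MvPolynomial.X 1]

/-- Membership in the set `H_{i,j,t,x} = {(α^{a i}, β^{b j}) : b ≡ a x (mod t)} ⊆ K × K`. -/
def Hmem (α β : K) (i j t x : ℕ) (p : K × K) : Prop :=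
  ∃ a b : ℤ, b ≡ a * (x : ℤ) [ZMOD (t : ℤ)] ∧
    p = (α ^ (a * (i : ℤ)), β ^ (b * (j : ℤ)))

/-- `f ∈ K[X,Y]` is an eigenfunction for `H_{i,j,t,x}`. -/
def IsEigen (α β : K) (i j t x : ℕ) (f : Poly K) : Prop :=
  ∀ p : K × K, Hmem α β i j t x p → ∃ lam : K, act p.1 p.2 f = lam • f

/-- `f ∈ K[X,Y]` belongs to the invariant ring `A_{i,j,t,x} = K[X,Y]^{H_{i,j,t,x}}`. -/
def Invariant (α β : K) (i j t x : ℕ) (f : Poly K) : Prop :=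
  ∀ p : K × K, Hmem α β i j t x p → act p.1 p.2 f = f

/-- A `ℚ`-valued (rational rank 1) valuation on a field `L`: the data of the values of the
nonzero elements (the value of `0` is irrelevant). -/
structure RatVal (L : Type) [Field L] where
  v : L → ℚ
  v_mul : ∀ a b : L, a ≠ 0 → b ≠ 0 → v (a * b) = v a + v b
  v_add : ∀ a b : L, a ≠ 0 → b ≠ 0 → a + b ≠ 0 → min (v a) (v b) ≤ v (a + b)

/-- Value of a polynomial under a valuation of `K(X,Y)`. -/
def vP (ν : RatVal (RF K)) (f : Poly K) : ℚ :=
  ν.v (algebraMap (Poly K) (RF K) f)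

/-- `ν` dominates `R_𝔪 = K[X,Y]_{(X,Y)}` : `ν ≥ 0` on `R_𝔪` and `ν > 0` on its maximal
ideal (expressed on the level of polynomials). -/
def DominatesRm (ν : RatVal (RF K)) : Prop :=
  (∀ f : Poly K, f ≠ 0 → 0 ≤ vP ν f) ∧
  (∀ f : Poly K, f ≠ 0 → MvPolynomial.constantCoeff f = 0 → 0 < vP ν f)

/-- `ν` is non-discrete: its value group is not a cyclic subgroup of `ℚ`. -/
def Nondiscrete (ν : RatVal (RF K)) : Prop :=
  ¬ ∃ g : ℚ, ∀ z : RF K, z ≠ 0 → ∃ k : ℤ, ν.v z = (k : ℚ) * g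

/-- Data of a candidate generating sequence: the polynomials `Q_l` and the numbers `m̄_l`. -/
structure GSData (K : Type) [Field K] where
  Q : ℕ → Poly K
  mbar : ℕ → ℕ

/-- `γ_l = ν(Q_l)`. -/
def GSData.γ (G : GSData K) (ν : RatVal (RF K)) (l : ℕ) : ℚ := vP ν (G.Q l)

/-- `d(l) = m̄_1 ⋯ m̄_{l-1}` (so `d(1) = 1`). -/
def GSData.d (G : GSData K) (l : ℕ) : ℕ := ∏ k ∈ Finset.Icc 1 (l - 1), G.mbar k

/-- An exponent vector `e` is admissible when `e k < m̄_k` for all `k ≥ 1`. -/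
def Adm (G : GSData K) (e : ℕ →₀ ℕ) : Prop := ∀ k, 1 ≤ k → e k < G.mbar k

/-- The monomial `X^{e 0} Q_1^{e 1} Q_2^{e 2} ⋯` in the generating sequence. -/
def Pmon (G : GSData K) (e : ℕ →₀ ℕ) : Poly K := e.prod fun k a => G.Q k ^ a

/-- The value `Σ_k e k • γ_k` of such a monomial. -/
def evalγ (ν : RatVal (RF K)) (G : GSData K) (e : ℕ →₀ ℕ) : ℚ :=
  e.sum fun k a => (a : ℚ) * G.γ ν k

/-- `(Q_l)_{l≥0}` is a generating sequence for `ν` in `K[X,Y]` (properties (1)–(4) of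
Section 2 of the paper, for the algorithm of Cutkosky–Vinh). -/
structure IsGenSeq (ν : RatVal (RF K)) (G : GSData K) : Prop where
  hQ0 : G.Q 0 = MvPolynomial.X 0
  hQ1 : G.Q 1 = MvPolynomial.X 1
  /-- `m̄_l ≥ 1`. -/
  hmbar_pos : ∀ l, 1 ≤ l → 0 < G.mbar l
  /-- `m̄_l γ_l ∈ G(γ_0, …, γ_{l-1})`. -/
  hmbar_mem : ∀ l, 1 ≤ l → ∃ c : ℕ → ℤ,
      (G.mbar l : ℚ) * G.γ ν l = ∑ k ∈ Finset.range l, (c k : ℚ) * G.γ ν k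
  /-- `m̄_l` is minimal with this property. -/
  hmbar_min : ∀ l, 1 ≤ l → ∀ q : ℕ, 0 < q →
      (∃ c : ℕ → ℤ, (q : ℚ) * G.γ ν l = ∑ k ∈ Finset.range l, (c k : ℚ) * G.γ ν k) →
      G.mbar l ≤ q
  /-- (1) `γ_{l+1} > m̄_l γ_l`. -/
  hgrowth : ∀ l, 1 ≤ l → (G.mbar l : ℚ) * G.γ ν l < G.γ ν (l + 1)
  /-- (2) `Q_l = Y^{d(l)} + (terms of lower Y-degree)`. -/
  hmonic : ∀ l, 1 ≤ l →
      G.Q l - MvPolynomial.X 1 ^ G.d l = 0 ∨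
      MvPolynomial.degreeOf 1 (G.Q l - MvPolynomial.X 1 ^ G.d l) < G.d l
  /-- (3), existence and uniqueness of the expansion of any nonzero `f` in terms of the
  admissible monomials `X^{e 0} Q_1^{e 1} ⋯ Q_r^{e r}`, `e k < m̄_k` for `k ≥ 1`. -/
  hexpand : ∀ f : Poly K, f ≠ 0 →
      ∃! c : (ℕ →₀ ℕ) →₀ K,
        (∀ e ∈ c.support, Adm G e) ∧
        f = c.sum fun e a => MvPolynomial.C a * Pmon G e
  /-- (3), the nonzero terms of the expansion have pairwise distinct values and
  `ν(f)` is the minimum of those values. -/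
  hval : ∀ f : Poly K, f ≠ 0 → ∀ c : (ℕ →₀ ℕ) →₀ K,
      (∀ e ∈ c.support, Adm G e) →
      f = (c.sum fun e a => MvPolynomial.C a * Pmon G e) →
      (∀ e ∈ c.support, ∀ e' ∈ c.support, evalγ ν G e = evalγ ν G e' → e = e') ∧
      ∃ e₀ ∈ c.support, vP ν f = evalγ ν G e₀ ∧
        ∀ e ∈ c.support, evalγ ν G e₀ ≤ evalγ ν G e
  /-- (4) `Q_{l+1} = Q_l^{m̄_l} - λ_l X^{c_0} Y^{c_1} Q_2^{c_2} ⋯ Q_{l-1}^{c_{l-1}}` with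
  `0 ≤ c_k < m̄_k` for `k ≥ 1` and `m̄_l γ_l = Σ_{k<l} c_k γ_k`. -/
  hrec : ∀ l, 1 ≤ l → ∃ lam : K, lam ≠ 0 ∧ ∃ cc : ℕ → ℕ,
      (∀ k, 1 ≤ k → k < l → cc k < G.mbar k) ∧
      G.Q (l + 1) =
        G.Q l ^ G.mbar l - MvPolynomial.C lam * ∏ k ∈ Finset.range l, G.Q k ^ cc k ∧
      (G.mbar l : ℚ) * G.γ ν l = ∑ k ∈ Finset.range l, (cc k : ℚ) * G.γ ν k

/-- The valuation semigroup `S^{R_𝔪}(ν) = {ν(h) : 0 ≠ h ∈ R_𝔪}`. -/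
def SRm (ν : RatVal (RF K)) : Set ℚ :=
  {q | ∃ f g : Poly K, f ≠ 0 ∧ MvPolynomial.constantCoeff g ≠ 0 ∧
    q = vP ν f - vP ν g}

/-- The valuation semigroup `S^{(A_{i,j,t,x})_𝔫}(ν)` of the invariant ring localized at
`𝔫 = (X,Y) ∩ A_{i,j,t,x}`. -/
def SA (ν : RatVal (RF K)) (α β : K) (i j t x : ℕ) : Set ℚ :=
  {q | ∃ f g : Poly K, f ≠ 0 ∧ Invariant α β i j t x f ∧ Invariant α β i j t x g ∧
    MvPolynomial.constantCoeff g ≠ 0 ∧ q = vP ν f - vP ν g}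

/-- `S` is a finitely generated module over the subsemigroup `T`:
`S = {s_1, …, s_k} + T` for finitely many `s_i ∈ S`. -/
def FGover (S T : Set ℚ) : Prop :=
  ∃ F : Finset ℚ, (F : Set ℚ) ⊆ S ∧ S = (F : Set ℚ) + T



section Helpers

variable {K : Type} [Field K]

lemma act_comp (u v u' v' : K) : (act u v).comp (act u' v') = act (u * u') (v * v') := by
  apply MvPolynomial.algHom_ext
  intro i
  fin_cases i <;> simp [act, mul_comm, mul_assoc, mul_left_comm]

lemma act_one_one : (act (1 : K) 1) = AlgHom.id K (Poly K) := by
  apply MvPolynomial.algHom_ext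
  intro i
  fin_cases i <;> simp [act]

lemma act_injective {u v : K} (hu : u ≠ 0) (hv : v ≠ 0) :
    Function.Injective (act u v : Poly K →ₐ[K] Poly K) := by
  have h3 : ∀ w : Poly K, act u⁻¹ v⁻¹ (act u v w) = w := by
    intro w
    calc act u⁻¹ v⁻¹ (act u v w) = ((act u⁻¹ v⁻¹).comp (act u v)) w := rfl
      _ = act (u⁻¹ * u) (v⁻¹ * v) w := by rw [act_comp]
      _ = act 1 1 w := by rw [inv_mul_cancel₀ hu, inv_mul_cancel₀ hv]
      _ = w := by rw [act_one_one]; rfl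
  intro f g h
  rw [← h3 f, ← h3 g, h]

lemma Q_ne_zero {ν : RatVal (RF K)} {G : GSData K} (hG : IsGenSeq ν G) (l : ℕ) :
    G.Q l ≠ 0 := by
  cases l with
  | zero => rw [hG.hQ0]; exact MvPolynomial.X_ne_zero (R := K) 0
  | succ l' =>
    intro h0
    have hdX : MvPolynomial.degreeOf 1 ((MvPolynomial.X 1 : Poly K) ^ G.d (l' + 1))
        = G.d (l' + 1) := by
      rw [MvPolynomial.degreeOf_eq_sup, MvPolynomial.support_X_pow]
      simp
    rcases hG.hmonic (l' + 1) (Nat.le_add_left 1 l') with h | h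
    · rw [h0, zero_sub, neg_eq_zero] at h
      exact pow_ne_zero _ (MvPolynomial.X_ne_zero (R := K) 1) h
    · rw [h0, zero_sub, MvPolynomial.degreeOf_neg, hdX] at h
      omega

lemma Pmon_ne_zero {ν : RatVal (RF K)} {G : GSData K} (hG : IsGenSeq ν G) (e : ℕ →₀ ℕ) :
    Pmon G e ≠ 0 := by
  unfold Pmon
  simp only [Finsupp.prod]
  exact Finset.prod_ne_zero_iff.mpr fun k _ => pow_ne_zero _ (Q_ne_zero hG k)

lemma act_Pmon {u v : K} {G : GSData K} {lam : ℕ → K}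
    (hlam : ∀ k, act u v (G.Q k) = MvPolynomial.C (lam k) * G.Q k) (e : ℕ →₀ ℕ) :
    act u v (Pmon G e)
      = MvPolynomial.C (e.prod fun k a => lam k ^ a) * Pmon G e := by
  unfold Pmon
  simp only [Finsupp.prod]
  rw [map_prod, map_prod, ← Finset.prod_mul_distrib]
  apply Finset.prod_congr rfl
  intro k _
  rw [map_pow, hlam k, mul_pow, ← MvPolynomial.C_pow]

lemma evalγ_inj [CharZero K] {ν : RatVal (RF K)} {G : GSData K} (hG : IsGenSeq ν G)
    {e e' : ℕ →₀ ℕ} (he : Adm G e) (he' : Adm G e')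
    (hv : evalγ ν G e = evalγ ν G e') : e = e' := by
  classical
  by_cases h : e = e'
  · exact h
  exfalso
  set f : Poly K := Pmon G e + Pmon G e' with hfdef
  have hf : f ≠ 0 := by
    intro h0
    have hPe : Pmon G e ≠ 0 := Pmon_ne_zero hG e
    have h1 : Pmon G e = (Finsupp.single e' (-1 : K)).sum
        fun ee a => MvPolynomial.C a * Pmon G ee := by
      rw [Finsupp.sum_single_index (by simp)]
      have : Pmon G e = -Pmon G e' := by
        have := h0; rw [hfdef] at this; linear_combination this
      rw [this]; simp
    have h2 : Pmon G e = (Finsupp.single e (1 : K)).sum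
        fun ee a => MvPolynomial.C a * Pmon G ee := by
      rw [Finsupp.sum_single_index (by simp)]; simp
    obtain ⟨cs, _, huniq⟩ := hG.hexpand (Pmon G e) hPe
    have hA1 : ∀ ee ∈ (Finsupp.single e' (-1 : K)).support, Adm G ee := by
      intro ee hee
      rw [Finsupp.support_single_ne_zero e' (by norm_num)] at hee
      rw [Finset.mem_singleton] at hee; rw [hee]; exact he'
    have hA2 : ∀ ee ∈ (Finsupp.single e (1 : K)).support, Adm G ee := by
      intro ee hee
      rw [Finsupp.support_single_ne_zero e (one_ne_zero)] at hee
      rw [Finset.mem_singleton] at hee; rw [hee]; exact he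
    have heq : (Finsupp.single e (1 : K)) = Finsupp.single e' (-1 : K) :=
      (huniq _ ⟨hA2, h2⟩).trans (huniq _ ⟨hA1, h1⟩).symm
    have := Finsupp.ext_iff.mp heq e
    rw [Finsupp.single_eq_same, Finsupp.single_eq_of_ne' (Ne.symm h)] at this
    exact one_ne_zero this
  set c : (ℕ →₀ ℕ) →₀ K := Finsupp.single e (1 : K) + Finsupp.single e' (1 : K) with hcdef
  have hsupp : c.support = {e, e'} := by
    rw [hcdef, Finsupp.support_add_eq, Finsupp.support_single_ne_zero e one_ne_zero,
      Finsupp.support_single_ne_zero e' one_ne_zero]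
    · rfl
    · rw [Finsupp.support_single_ne_zero e one_ne_zero,
        Finsupp.support_single_ne_zero e' one_ne_zero]
      simpa using fun hh => h hh
  have hAdm : ∀ ee ∈ c.support, Adm G ee := by
    intro ee hee
    rw [hsupp, Finset.mem_insert, Finset.mem_singleton] at hee
    rcases hee with hh | hh <;> rw [hh]
    exacts [he, he']
  have hsum : f = c.sum fun ee a => MvPolynomial.C a * Pmon G ee := by
    rw [hcdef, Finsupp.sum_add_index' (fun ee => by simp)
      (fun ee b₁ b₂ => by rw [MvPolynomial.C_add, add_mul]),
      Finsupp.sum_single_index (by simp), Finsupp.sum_single_index (by simp)]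
    simp [hfdef]
  have hmem : e ∈ c.support := by rw [hsupp]; simp
  have hmem' : e' ∈ c.support := by rw [hsupp]; simp
  exact h ((hG.hval f hf c hAdm hsum).1 e hmem e' hmem' hv)

lemma transform {ν : RatVal (RF K)} {G : GSData K} (hG : IsGenSeq ν G)
    {u v : K} (hu : u ≠ 0) (hv : v ≠ 0) {lam : ℕ → K}
    (hlam : ∀ k, act u v (G.Q k) = MvPolynomial.C (lam k) * G.Q k)
    {f : Poly K} (hf : f ≠ 0) {c : (ℕ →₀ ℕ) →₀ K}
    (hadm : ∀ e ∈ c.support, Adm G e)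
    (hsum : f = c.sum fun e a => MvPolynomial.C a * Pmon G e)
    {lamf : K} (hlf : act u v f = MvPolynomial.C lamf * f) :
    ∀ e ∈ c.support, (e.prod fun k a => lam k ^ a) = lamf := by
  classical
  have hinj := act_injective hu hv
  have hlam0 : ∀ k, lam k ≠ 0 := by
    intro k h0
    have h1 := hlam k
    rw [h0, MvPolynomial.C_0, zero_mul] at h1
    exact Q_ne_zero hG k (hinj (h1.trans (map_zero _).symm))
  set lP : (ℕ →₀ ℕ) → K := fun e => e.prod fun k a => lam k ^ a with hlP
  have hlP0 : ∀ e, lP e ≠ 0 := by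
    intro e
    rw [hlP]
    simp only [Finsupp.prod]
    exact Finset.prod_ne_zero_iff.mpr fun k _ => pow_ne_zero _ (hlam0 k)
  have hF : act u v f ≠ 0 := by
    intro h0
    exact hf (hinj (h0.trans (map_zero _).symm))
  have hlamf0 : lamf ≠ 0 := by
    intro h0
    rw [h0, MvPolynomial.C_0, zero_mul] at hlf
    exact hF hlf
  set c₁ : (ℕ →₀ ℕ) →₀ K := Finsupp.mk c.support (fun e => c e * lP e)
    (fun e => by
      rw [Finsupp.mem_support_iff]
      constructor
      · exact fun hh => mul_ne_zero hh (hlP0 e)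
      · exact fun hh h0 => hh (by show c e * lP e = 0; rw [h0, zero_mul])) with hc₁
  set c₂ : (ℕ →₀ ℕ) →₀ K := Finsupp.mk c.support (fun e => lamf * c e)
    (fun e => by
      rw [Finsupp.mem_support_iff]
      constructor
      · exact fun hh => mul_ne_zero hlamf0 hh
      · exact fun hh h0 => hh (by show lamf * c e = 0; rw [h0, mul_zero])) with hc₂
  have hs₁ : c₁.support = c.support := rfl
  have hs₂ : c₂.support = c.support := rfl
  have key : act u v f = ∑ e ∈ c.support, MvPolynomial.C (c e * lP e) * Pmon G e := by
    rw [hsum, map_finsuppSum]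
    simp only [Finsupp.sum]
    apply Finset.sum_congr rfl
    intro e _
    rw [map_mul, act_Pmon hlam e]
    rw [show (act u v) (MvPolynomial.C (c e)) = MvPolynomial.C (c e) from by
      simp [act]]
    rw [← mul_assoc, ← MvPolynomial.C_mul]
  have key₂ : act u v f = ∑ e ∈ c.support, MvPolynomial.C (lamf * c e) * Pmon G e := by
    rw [hlf, hsum]
    simp only [Finsupp.sum]
    rw [Finset.mul_sum]
    apply Finset.sum_congr rfl
    intro e _
    rw [← mul_assoc, ← MvPolynomial.C_mul]
  have hP₁ : (∀ e ∈ c₁.support, Adm G e) ∧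
      act u v f = c₁.sum fun e a => MvPolynomial.C a * Pmon G e := by
    refine ⟨by rw [hs₁]; exact hadm, ?_⟩
    rw [key]
    simp only [Finsupp.sum, hs₁]
    rfl
  have hP₂ : (∀ e ∈ c₂.support, Adm G e) ∧
      act u v f = c₂.sum fun e a => MvPolynomial.C a * Pmon G e := by
    refine ⟨by rw [hs₂]; exact hadm, ?_⟩
    rw [key₂]
    simp only [Finsupp.sum, hs₂]
    rfl
  obtain ⟨cs, _, huniq⟩ := hG.hexpand (act u v f) hF
  have hc12 : c₁ = c₂ := (huniq _ hP₁).trans (huniq _ hP₂).symm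
  intro e he
  have hcc : c e * lP e = lamf * c e := Finsupp.ext_iff.mp hc12 e
  have hce : c e ≠ 0 := Finsupp.mem_support_iff.mp he
  have hcc' : lP e * c e = lamf * c e := by rw [mul_comm (lP e)]; exact hcc
  exact mul_right_cancel₀ hce hcc'

end Helpers

/-- for `r ≥ 1`, `γ_r ∈ S^{(A)_𝔫}(ν)` iff `Q_r ∈ A_{i,j,t,x}`. -/
theorem stmt_7 (K : Type) [Field K] [IsAlgClosed K] [CharZero K]
    (m n : ℕ) (hm : 0 < m) (hn : 0 < n) (α β : K)
    (hα : IsPrimitiveRoot α m) (hβ : IsPrimitiveRoot β n)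
    (i j t x : ℕ) (hi : 0 < i) (hj : 0 < j) (ht : 0 < t)
    (him : i ∣ m) (hjn : j ∣ n) (hti : t ∣ m / i) (htj : t ∣ n / j)
    (hxt : Nat.gcd x t = 1) (hx1 : 1 ≤ x) (hxle : x ≤ t)
    (ν : RatVal (RF K)) (hdom : DominatesRm ν) (hnd : Nondiscrete ν)
    (G : GSData K) (hG : IsGenSeq ν G)
    (heig : ∀ l, IsEigen α β i j t x (G.Q l)) :
    ∀ r, 1 ≤ r → (G.γ ν r ∈ SA ν α β i j t x ↔ Invariant α β i j t x (G.Q r)) := by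
  intro r hr
  have hα0 : α ≠ 0 := hα.ne_zero hm.ne'
  have hβ0 : β ≠ 0 := hβ.ne_zero hn.ne'
  have hQne := Q_ne_zero hG
  have hmapinj : Function.Injective (algebraMap (Poly K) (RF K)) :=
    IsFractionRing.injective _ _
  have hmapne : ∀ f : Poly K, f ≠ 0 → (algebraMap (Poly K) (RF K)) f ≠ 0 := by
    intro f hf h0
    exact hf (hmapinj (h0.trans (map_zero _).symm))
  have hvmul : ∀ f g : Poly K, f ≠ 0 → g ≠ 0 → vP ν (f * g) = vP ν f + vP ν g := by
    intro f g hf hg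
    unfold vP
    rw [map_mul]
    exact ν.v_mul _ _ (hmapne f hf) (hmapne g hg)
  have hv1 : vP ν (1 : Poly K) = 0 := by
    have h := ν.v_mul 1 1 one_ne_zero one_ne_zero
    rw [mul_one] at h
    have h2 : vP ν (1 : Poly K) = ν.v 1 := by unfold vP; rw [map_one]
    rw [h2]; linarith
  constructor
  · rintro ⟨f, g, hf, hfin, hgin, hg0, hq⟩
    have hg : g ≠ 0 := by
      intro h0; rw [h0] at hg0; exact hg0 (map_zero _)
    have hF : G.Q r * g ≠ 0 := mul_ne_zero (hQne r) hg
    have hq' : vP ν (G.Q r) = vP ν f - vP ν g := hq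
    have hvF : vP ν (G.Q r * g) = vP ν f := by
      rw [hvmul _ _ (hQne r) hg]
      linarith
    obtain ⟨cf, ⟨hcfA, hcfS⟩, -⟩ := hG.hexpand f hf
    obtain ⟨cF, ⟨hcFA, hcFS⟩, -⟩ := hG.hexpand (G.Q r * g) hF
    obtain ⟨-, e₀, he₀, hve₀, -⟩ := hG.hval f hf cf hcfA hcfS
    obtain ⟨-, e₁, he₁, hve₁, -⟩ := hG.hval _ hF cF hcFA hcFS
    have heq : e₀ = e₁ := evalγ_inj hG (hcfA e₀ he₀) (hcFA e₁ he₁)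
      (by rw [← hve₀, ← hve₁, hvF])
    intro p hp
    obtain ⟨a, b, -, hpeq⟩ := id hp
    obtain ⟨lamr, hlamr⟩ := heig r p hp
    have hu : p.1 ≠ 0 := by rw [hpeq]; simpa using zpow_ne_zero _ hα0
    have hvne : p.2 ≠ 0 := by rw [hpeq]; simpa using zpow_ne_zero _ hβ0
    choose lam hlam using fun k => heig k p hp
    have hlam' : ∀ k, act p.1 p.2 (G.Q k) = MvPolynomial.C (lam k) * G.Q k := by
      intro k; rw [hlam k, MvPolynomial.smul_eq_C_mul]
    have hactf : act p.1 p.2 f = MvPolynomial.C 1 * f := by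
      rw [hfin p hp, MvPolynomial.C_1, one_mul]
    have h1 := transform hG hu hvne hlam' hf hcfA hcfS hactf e₀ he₀
    have hactF : act p.1 p.2 (G.Q r * g) = MvPolynomial.C lamr * (G.Q r * g) := by
      rw [map_mul, hlamr, hgin p hp, MvPolynomial.smul_eq_C_mul, mul_assoc]
    have h2 := transform hG hu hvne hlam' hF hcFA hcFS hactF e₁ he₁
    have hl1 : lamr = 1 := by rw [← h2, ← heq, h1]
    rw [hlamr, hl1, one_smul]
  · intro hinv
    refine ⟨G.Q r, 1, hQne r, hinv, fun p hp => map_one _, ?_, ?_⟩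
    · rw [map_one]; exact one_ne_zero
    · rw [hv1]
      have h2 : G.γ ν r = vP ν (G.Q r) := rfl
      rw [h2]; ring

end DuttaPaper
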